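/- arXiv:1607.04679 — 3 statements merged into one kernel-verified Lean document; each statement's English description precedes it below -/
import Mathlib

section
/- Let X be a metric space, x₀ ∈ X, and define the tent functions f_n(x) = max(0, 1 − 2^n · d(x₀, x)). Let μ be a Borel probability measure on X such that ∫ f_n dμ < 2^{-n} for infinitely many n. Then the function t(x) = Σ_{n∈ℕ} (2^{-n} / max(2^{-n}, ∫ f_n dμ)) · f_n(x) satisfies t(x₀) = ∞, while ∫ t dμ ≤ 2. -/
open MeasureTheory ENNReal Filter

/-- the tent-function test diverges at `x₀` for a (weakly) generic-like
measure, while its integral stays bounded by 2. -/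
theorem stmt_6 {X : Type*} [MetricSpace X] [MeasurableSpace X] [BorelSpace X]
    (x₀ : X) (μ : Measure X) [IsProbabilityMeasure μ]
    (f : ℕ → X → ℝ≥0∞)
    (hf : ∀ n x, f n x = ENNReal.ofReal (max 0 (1 - 2 ^ n * dist x₀ x)))
    (hμ : ∃ᶠ n in atTop, ∫⁻ y, f n y ∂μ < (2 : ℝ≥0∞)⁻¹ ^ n)
    (t : X → ℝ≥0∞)
    (ht : ∀ x, t x = ∑' n : ℕ,
      ((2 : ℝ≥0∞)⁻¹ ^ n / max ((2 : ℝ≥0∞)⁻¹ ^ n) (∫⁻ y, f n y ∂μ)) * f n x) :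
    t x₀ = ∞ ∧ ∫⁻ x, t x ∂μ ≤ 2 := by
  have hpow0 : ∀ n : ℕ, ((2 : ℝ≥0∞)⁻¹ ^ n) ≠ 0 := by
    intro n
    simp [pow_eq_zero_iff]
  have hpowtop : ∀ n : ℕ, ((2 : ℝ≥0∞)⁻¹ ^ n) ≠ ∞ := by
    intro n
    exact (pow_lt_top (by norm_num : (2 : ℝ≥0∞)⁻¹ < ∞)).ne
  have hfx₀ : ∀ n, f n x₀ = 1 := by
    intro n
    simp [hf]
  have hmeas : ∀ n, Measurable (f n) := by
    intro n
    have : Continuous fun x => ENNReal.ofReal (max 0 (1 - 2 ^ n * dist x₀ x)) :=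
      ENNReal.continuous_ofReal.comp (by fun_prop)
    simpa [funext (hf n)] using this.measurable
  constructor
  · rw [ht]
    by_contra h
    have hfin := ENNReal.finite_const_le_of_tsum_ne_top h (ε := 1) one_ne_zero
    have hinf : {n : ℕ | (1 : ℝ≥0∞) ≤
        ((2 : ℝ≥0∞)⁻¹ ^ n / max ((2 : ℝ≥0∞)⁻¹ ^ n) (∫⁻ y, f n y ∂μ)) * f n x₀}.Infinite := by
      apply Set.infinite_of_not_bddAbove
      intro ⟨B, hB⟩
      obtain ⟨n, hn, hlt⟩ := (frequently_atTop.mp hμ) (B + 1)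
      have hmax : max ((2 : ℝ≥0∞)⁻¹ ^ n) (∫⁻ y, f n y ∂μ) = (2 : ℝ≥0∞)⁻¹ ^ n :=
        max_eq_left hlt.le
      have hmem : n ∈ {n : ℕ | (1 : ℝ≥0∞) ≤
          ((2 : ℝ≥0∞)⁻¹ ^ n / max ((2 : ℝ≥0∞)⁻¹ ^ n) (∫⁻ y, f n y ∂μ)) * f n x₀} := by
        simp [hmax, hfx₀, ENNReal.div_self (hpow0 n) (hpowtop n)]
      have := hB hmem
      omega
    exact hinf hfin
  · have hint : ∫⁻ x, t x ∂μ = ∑' n : ℕ,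
        ((2 : ℝ≥0∞)⁻¹ ^ n / max ((2 : ℝ≥0∞)⁻¹ ^ n) (∫⁻ y, f n y ∂μ)) * ∫⁻ y, f n y ∂μ := by
      have h1 : ∫⁻ x, t x ∂μ = ∫⁻ x, ∑' n : ℕ,
          ((2 : ℝ≥0∞)⁻¹ ^ n / max ((2 : ℝ≥0∞)⁻¹ ^ n) (∫⁻ y, f n y ∂μ)) * f n x ∂μ :=
        lintegral_congr ht
      rw [h1, lintegral_tsum fun n => ((hmeas n).const_mul _).aemeasurable]
      congr 1
      ext n
      rw [lintegral_const_mul _ (hmeas n)]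
    rw [hint]
    calc ∑' n : ℕ, ((2 : ℝ≥0∞)⁻¹ ^ n / max ((2 : ℝ≥0∞)⁻¹ ^ n) (∫⁻ y, f n y ∂μ)) * ∫⁻ y, f n y ∂μ
        ≤ ∑' n : ℕ, (2 : ℝ≥0∞)⁻¹ ^ n := by
          apply ENNReal.tsum_le_tsum
          intro n
          calc ((2 : ℝ≥0∞)⁻¹ ^ n / max ((2 : ℝ≥0∞)⁻¹ ^ n) (∫⁻ y, f n y ∂μ)) * ∫⁻ y, f n y ∂μ
              ≤ ((2 : ℝ≥0∞)⁻¹ ^ n / max ((2 : ℝ≥0∞)⁻¹ ^ n) (∫⁻ y, f n y ∂μ)) *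
                max ((2 : ℝ≥0∞)⁻¹ ^ n) (∫⁻ y, f n y ∂μ) :=
                mul_le_mul_right (le_max_right _ _) _
            _ ≤ (2 : ℝ≥0∞)⁻¹ ^ n := by
                have hne0 : max ((2 : ℝ≥0∞)⁻¹ ^ n) (∫⁻ y, f n y ∂μ) ≠ 0 :=
                  fun h => hpow0 n (le_antisymm (h ▸ le_max_left _ _) zero_le)
                have hle1 : ∫⁻ y, f n y ∂μ ≤ 1 := by
                  calc ∫⁻ y, f n y ∂μ ≤ ∫⁻ _, 1 ∂μ := by
                        apply lintegral_mono
                        intro y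
                        rw [hf]
                        exact ENNReal.ofReal_le_one.2 (by
                          have := dist_nonneg (x := x₀) (y := y)
                          have : (0:ℝ) ≤ 2 ^ n * dist x₀ y := by positivity
                          simp only [max_le_iff]
                          constructor <;> linarith)
                    _ = 1 := by simp
                have hnetop : max ((2 : ℝ≥0∞)⁻¹ ^ n) (∫⁻ y, f n y ∂μ) ≠ ∞ := by
                  apply ne_top_of_le_ne_top one_ne_top
                  exact max_le (by
                    calc (2 : ℝ≥0∞)⁻¹ ^ n ≤ 1 ^ n := pow_le_pow_left' (by norm_num) n
                      _ = 1 := one_pow n) hle1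
                rw [ENNReal.div_mul_cancel hne0 hnetop]
      _ = 2 := by
          rw [ENNReal.tsum_geometric, ENNReal.one_sub_inv_two, inv_inv]
end

section
/- Let ν be a probability measure on Y and let (f_r)_{r∈[0,∞)} be a family of nonnegative measurable functions, nondecreasing in r, with r ↦ ∫ f_r dν continuous and nondecreasing, f_0 = 0, and let s = sup_r f_r. Suppose 0 ≤ h ≤ ∫ s dν (with h finite). Define ŝ = sup{ f_r : r ∈ [0,∞), ∫ f_r dν ≤ h }. Then ∫ ŝ dν = h, and if moreover h = ∫ s dν < ∞ then ŝ = s pointwise ν-a.e. -/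
open MeasureTheory ENNReal Set

/-- Any nonempty set of reals admits a monotone cofinal sequence. -/
lemma exists_monotone_cofinal (A : Set ℝ) (hA : A.Nonempty) :
    ∃ t : ℕ → ℝ, Monotone t ∧ (∀ n, t n ∈ A) ∧ ∀ a ∈ A, ∃ n, a ≤ t n := by
  have key : ∃ g : ℕ → ℝ, (∀ n, g n ∈ A) ∧ ∀ a ∈ A, ∃ n, a ≤ g n := by
    by_cases hb : BddAbove A
    · by_cases hmem : sSup A ∈ A
      · exact ⟨fun _ => sSup A, fun _ => hmem, fun a ha => ⟨0, le_csSup hb ha⟩⟩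
      · obtain ⟨u, hu_mono, hu_tend, hu_mem⟩ := exists_seq_tendsto_sSup hA hb
        refine ⟨u, hu_mem, fun a ha => ?_⟩
        have halt : a < sSup A := lt_of_le_of_ne (le_csSup hb ha)
          (fun hEq => hmem (hEq ▸ ha))
        have : ∀ᶠ n in Filter.atTop, a < u n := hu_tend.eventually (lt_mem_nhds halt)
        obtain ⟨n, hn⟩ := this.exists
        exact ⟨n, hn.le⟩
    · have : ∀ n : ℕ, ∃ a ∈ A, (n : ℝ) < a := by
        intro n
        obtain ⟨a, ha, hlt⟩ := not_bddAbove_iff.1 hb n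
        exact ⟨a, ha, hlt⟩
      choose g hg hgn using this
      refine ⟨g, hg, fun a ha => ⟨⌈a⌉₊, le_trans (Nat.le_ceil a) (hgn _).le⟩⟩
  obtain ⟨g, hg_mem, hg_cof⟩ := key
  refine ⟨fun n => Nat.rec (g 0) (fun k ih => max ih (g (k + 1))) n, ?_, ?_, ?_⟩
  · apply monotone_nat_of_le_succ
    intro n
    exact le_max_left _ _
  · intro n
    induction n with
    | zero => exact hg_mem 0
    | succ k ih =>
      rcases le_total (Nat.rec (g 0) (fun k ih => max ih (g (k + 1))) k) (g (k + 1)) with hle | hle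
      · simpa [max_eq_right hle] using hg_mem (k + 1)
      · simpa [max_eq_left hle] using ih
  · intro a ha
    obtain ⟨n, hn⟩ := hg_cof a ha
    refine ⟨n, hn.trans ?_⟩
    cases n with
    | zero => exact le_rfl
    | succ k => exact le_max_right _ _

/-- cutting off the enumeration of a test at a prescribed integral value. -/
theorem stmt_7 {Y : Type*} [MeasurableSpace Y] (ν : Measure Y) [IsProbabilityMeasure ν]
    (f : ℝ → Y → ℝ≥0∞)
    (hf_meas : ∀ r, Measurable (f r))
    (hf_mono : ∀ y, MonotoneOn (fun r => f r y) (Ici 0))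
    (hf_zero : ∀ y, f 0 y = 0)
    (hI_cont : ContinuousOn (fun r => ∫⁻ y, f r y ∂ν) (Ici 0))
    (hI_mono : MonotoneOn (fun r => ∫⁻ y, f r y ∂ν) (Ici 0))
    (s : Y → ℝ≥0∞) (hs : ∀ y, s y = ⨆ r : {r : ℝ // 0 ≤ r}, f r.1 y)
    (h : ℝ≥0∞) (h_fin : h < ∞) (h_le : h ≤ ∫⁻ y, s y ∂ν)
    (sHat : Y → ℝ≥0∞)
    (hsHat : ∀ y, sHat y = ⨆ r : {r : ℝ // 0 ≤ r ∧ ∫⁻ z, f r z ∂ν ≤ h}, f r.1 y) :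
    (∫⁻ y, sHat y ∂ν = h) ∧
    (h = ∫⁻ y, s y ∂ν → sHat =ᵐ[ν] s) := by
  set I : ℝ → ℝ≥0∞ := fun r => ∫⁻ y, f r y ∂ν with hI
  -- basic facts
  have hI0 : I 0 = 0 := by
    simp only [hI]
    rw [show (fun y => f 0 y) = fun _ => (0 : ℝ≥0∞) from funext hf_zero]
    simp
  have hfr_le_s : ∀ r, 0 ≤ r → ∀ y, f r y ≤ s y := by
    intro r hr y
    rw [hs y]
    exact le_iSup (fun q : {q : ℝ // 0 ≤ q} => f q.1 y) ⟨r, hr⟩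
  have hIleL : ∀ r, 0 ≤ r → I r ≤ ∫⁻ y, s y ∂ν :=
    fun r hr => lintegral_mono (hfr_le_s r hr)
  -- s as a countable sup
  have hseq : ∀ y, s y = ⨆ n : ℕ, f n y := by
    intro y
    rw [hs y]
    apply le_antisymm
    · apply iSup_le
      rintro ⟨r, hr⟩
      exact le_trans (hf_mono y hr (Set.mem_Ici.2 (Nat.cast_nonneg _)) (Nat.le_ceil r))
        (le_iSup (fun n : ℕ => f n y) ⌈r⌉₊)
    · exact iSup_le fun n =>
        le_iSup (fun q : {q : ℝ // 0 ≤ q} => f q.1 y) ⟨n, Nat.cast_nonneg n⟩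
  have hs_meas : Measurable s := by
    rw [show s = fun y => ⨆ n : ℕ, f n y from funext hseq]
    exact Measurable.iSup fun n => hf_meas _
  have hL : ∫⁻ y, s y ∂ν = ⨆ n : ℕ, I n := by
    simp only [hI]
    rw [show s = fun y => ⨆ n : ℕ, f n y from funext hseq]
    exact lintegral_iSup (fun n => hf_meas _)
      (fun n m hnm y => hf_mono y (Set.mem_Ici.2 (Nat.cast_nonneg _))
        (Set.mem_Ici.2 (Nat.cast_nonneg _)) (Nat.cast_le.2 hnm))
  -- the index set
  set A : Set ℝ := {r | 0 ≤ r ∧ I r ≤ h} with hA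
  have hA_ne : A.Nonempty := ⟨0, le_rfl, hI0 ▸ (zero_le : (0 : ℝ≥0∞) ≤ h)⟩
  obtain ⟨t, ht_mono, ht_mem, ht_cof⟩ := exists_monotone_cofinal A hA_ne
  have ht_nonneg : ∀ n, 0 ≤ t n := fun n => (ht_mem n).1
  -- sHat as a countable sup
  have hsHat_seq : ∀ y, sHat y = ⨆ n : ℕ, f (t n) y := by
    intro y
    rw [hsHat y]
    apply le_antisymm
    · apply iSup_le
      rintro ⟨r, hr0, hrI⟩
      obtain ⟨n, hn⟩ := ht_cof r ⟨hr0, hrI⟩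
      exact le_trans (hf_mono y hr0 (ht_nonneg n) hn) (le_iSup (fun n => f (t n) y) n)
    · exact iSup_le fun n =>
        le_iSup (fun q : {q : ℝ // 0 ≤ q ∧ I q ≤ h} => f q.1 y) ⟨t n, ht_mem n⟩
  have hsHat_int : ∫⁻ y, sHat y ∂ν = ⨆ n : ℕ, I (t n) := by
    simp only [hI]
    rw [show sHat = fun y => ⨆ n : ℕ, f (t n) y from funext hsHat_seq]
    exact lintegral_iSup (fun n => hf_meas _)
      (fun n m hnm y => hf_mono y (ht_nonneg n) (ht_nonneg m) (ht_mono hnm))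
  -- upper bound
  have h_upper : ∫⁻ y, sHat y ∂ν ≤ h := by
    rw [hsHat_int]
    exact iSup_le fun n => (ht_mem n).2
  -- lower bound
  have h_lower : h ≤ ∫⁻ y, sHat y ∂ν := by
    have hle_of_mem : ∀ r ∈ A, I r ≤ ∫⁻ y, sHat y ∂ν := by
      intro r hr
      apply lintegral_mono
      intro y
      rw [hsHat y]
      exact le_iSup (fun q : {q : ℝ // 0 ≤ q ∧ I q ≤ h} => f q.1 y) ⟨r, hr⟩
    rcases eq_or_lt_of_le h_le with hEq | hlt
    · -- h = ∫ s : every r ≥ 0 is in A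
      rw [hEq, hL]
      exact iSup_le fun n => hle_of_mem (n : ℝ)
        ⟨Nat.cast_nonneg n, (hIleL n (Nat.cast_nonneg n)).trans hEq.ge⟩
    · -- h < ∫ s : use IVT to find r with I r = h
      rw [hL] at hlt
      obtain ⟨n, hn⟩ := lt_iSup_iff.1 hlt
      have hcont : ContinuousOn I (Icc (0 : ℝ) n) :=
        hI_cont.mono (Icc_subset_Ici_self)
      have hmem : h ∈ Icc (I 0) (I (n : ℝ)) := ⟨hI0 ▸ (zero_le : (0 : ℝ≥0∞) ≤ h), hn.le⟩
      obtain ⟨r, ⟨hr0, _⟩, hIr⟩ := intermediate_value_Icc (Nat.cast_nonneg n) hcont hmem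
      exact hIr ▸ hle_of_mem r ⟨hr0, hIr.le⟩
  have hmain : ∫⁻ y, sHat y ∂ν = h := le_antisymm h_upper h_lower
  refine ⟨hmain, fun hEq => ?_⟩
  have hle_ae : sHat ≤ᵐ[ν] s := Filter.Eventually.of_forall fun y => by
    rw [hsHat y, hs y]
    exact iSup_le fun q =>
      le_iSup (fun q : {q : ℝ // 0 ≤ q} => f q.1 y) ⟨q.1, q.2.1⟩
  exact ae_eq_of_ae_le_of_lintegral_le hle_ae (hmain ▸ h_fin.ne) hs_meas.aemeasurable
    (by rw [hmain, hEq])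
end

section
/- Let U be a subset of P([0,1]) × [0,1] such that each section U_μ = {x : (μ,x) ∈ U} is open in [0,1], the set U is open in the product topology (P([0,1]) with weak topology), and the map μ ↦ μ(U_μ) is continuous. Then either U_μ = ∅ for every μ, or μ(U_μ) = 1 for every μ. -/
open MeasureTheory ENNReal

open MeasureTheory ENNReal Filter Topology Set
open scoped NNReal ENNReal Classical

namespace Stmt14

noncomputable section

abbrev X := unitInterval
abbrev P := ProbabilityMeasure X

def θ (t : ℝ) : ℝ≥0 := Real.toNNReal (min t 1)

lemma θ_cont : Continuous θ := continuous_real_toNNReal.comp (continuous_id.min continuous_const)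

lemma θ_coe (t : ℝ) : ((θ t : ℝ≥0) : ℝ) = max (min t 1) 0 := Real.coe_toNNReal' _

lemma θ_coe_cont : Continuous fun t => ((θ t : ℝ≥0) : ℝ) := NNReal.continuous_coe.comp θ_cont

lemma θ_add_real (t : ℝ) : ((θ t : ℝ≥0) : ℝ) + ((θ (1 - t) : ℝ≥0) : ℝ) = 1 := by
  rw [θ_coe, θ_coe]
  simp only [min_def, max_def]
  split_ifs <;> linarith

lemma θ_add_ennreal (t : ℝ) : (θ t : ℝ≥0∞) + (θ (1 - t) : ℝ≥0∞) = 1 := by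
  have h := θ_add_real t
  rw [← ENNReal.coe_add, ← ENNReal.coe_one]
  exact_mod_cast h

lemma θ_zero : θ 0 = 0 := by simp [θ]
lemma θ_one : θ 1 = 1 := by simp [θ]

def mix (x : X) (ν : P) (t : ℝ) : P :=
  ⟨(θ t : ℝ≥0∞) • Measure.dirac x + (θ (1 - t) : ℝ≥0∞) • (ν : Measure X), by
    constructor
    rw [Measure.add_apply, Measure.smul_apply, Measure.smul_apply, measure_univ, measure_univ,
      smul_eq_mul, smul_eq_mul, mul_one, mul_one]
    exact θ_add_ennreal t⟩

lemma mix_toMeasure (x : X) (ν : P) (t : ℝ) :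
    (mix x ν t : Measure X) = (θ t : ℝ≥0∞) • Measure.dirac x + (θ (1 - t) : ℝ≥0∞) • (ν : Measure X) := rfl

lemma mix_apply (x : X) (ν : P) (t : ℝ) (V : Set X) :
    (mix x ν t : Measure X) V
      = (θ t : ℝ≥0∞) * Measure.dirac x V + (θ (1 - t) : ℝ≥0∞) * (ν : Measure X) V := by
  rw [mix_toMeasure, Measure.add_apply, Measure.smul_apply, Measure.smul_apply,
    smul_eq_mul, smul_eq_mul]

def diracP (x : X) : P := ⟨Measure.dirac x, Measure.dirac.isProbabilityMeasure⟩

lemma diracP_toMeasure (x : X) : (diracP x : Measure X) = Measure.dirac x := rfl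

lemma mix_zero (x : X) (ν : P) : mix x ν 0 = ν := by
  apply Subtype.ext
  show (mix x ν 0 : Measure X) = (ν : Measure X)
  rw [mix_toMeasure]
  simp [θ_zero, θ_one]

lemma mix_one (x : X) (ν : P) : mix x ν 1 = diracP x := by
  apply Subtype.ext
  show (mix x ν 1 : Measure X) = (diracP x : Measure X)
  rw [mix_toMeasure, diracP_toMeasure]
  simp [θ_zero, θ_one]

lemma continuous_mix (x : X) (ν : P) : Continuous fun t => mix x ν t := by
  rw [continuous_iff_continuousAt]
  intro t0
  rw [ContinuousAt, ProbabilityMeasure.tendsto_iff_forall_integral_tendsto]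
  intro g
  have key : ∀ t : ℝ, ∫ y, g y ∂(mix x ν t : Measure X)
      = ((θ t : ℝ≥0) : ℝ) * g x + ((θ (1 - t) : ℝ≥0) : ℝ) * ∫ y, g y ∂(ν : Measure X) := by
    intro t
    rw [mix_toMeasure, integral_add_measure ((g.integrable _).smul_measure ENNReal.coe_ne_top)
      ((g.integrable _).smul_measure ENNReal.coe_ne_top),
      integral_smul_measure, integral_smul_measure, integral_dirac]
    simp [ENNReal.coe_toReal]
  simp only [key]
  exact ((θ_coe_cont.mul continuous_const).add
    (((θ_coe_cont.comp (continuous_const.sub continuous_id)).mul continuous_const))).tendsto t0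

lemma continuous_diracP : Continuous diracP := by
  rw [continuous_iff_continuousAt]
  intro x0
  rw [ContinuousAt, ProbabilityMeasure.tendsto_iff_forall_integral_tendsto]
  intro g
  simp only [diracP_toMeasure, integral_dirac]
  exact g.continuous.tendsto x0

end
end Stmt14

namespace Stmt14
noncomputable section

variable {U : Set (P × X)}

/-- Lower semicontinuity of `ν ↦ m (sec ν)` for a fixed finite measure `m`. -/
lemma lsc_aux (hU_open : IsOpen U) (m : Measure X) [IsFiniteMeasure m] :
    LowerSemicontinuous fun ν : P => (m {x | (ν, x) ∈ U}).toReal := by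
  intro ν0 r hr
  rcases lt_or_ge r 0 with h0 | h0
  · exact Eventually.of_forall fun ν => lt_of_lt_of_le h0 ENNReal.toReal_nonneg
  · have hne : m {x | (ν0, x) ∈ U} ≠ ⊤ := measure_ne_top _ _
    have h1 : ENNReal.ofReal r < m {x | (ν0, x) ∈ U} :=
      (ENNReal.ofReal_lt_iff_lt_toReal h0 hne).2 hr
    have hopen : IsOpen {x : X | (ν0, x) ∈ U} :=
      hU_open.preimage (continuous_const.prodMk continuous_id)
    obtain ⟨K, hKsub, hKcomp, hKr⟩ := hopen.exists_lt_isCompact h1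
    have hsub : ({ν0} : Set P) ×ˢ K ⊆ U := by
      rintro ⟨a, b⟩ ⟨ha, hb⟩
      simp only [mem_singleton_iff] at ha
      subst ha
      exact hKsub hb
    obtain ⟨V, W, hVopen, _, hV0, hKW, hVW⟩ :=
      generalized_tube_lemma isCompact_singleton hKcomp hU_open hsub
    filter_upwards [hVopen.mem_nhds (hV0 rfl)] with ν hν
    have hKsec : K ⊆ {x | (ν, x) ∈ U} := fun x hx => hVW ⟨hν, hKW hx⟩
    have : ENNReal.ofReal r < m {x | (ν, x) ∈ U} := lt_of_lt_of_le hKr (measure_mono hKsec)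
    exact (ENNReal.ofReal_lt_iff_lt_toReal h0 (measure_ne_top _ _)).1 this

/-- product of a nonnegative continuous function and a nonnegative LSC function is LSC. -/
lemma lsc_mul {c u : ℝ → ℝ} (hc : Continuous c) (hc0 : ∀ t, 0 ≤ c t)
    (hu : LowerSemicontinuous u) (hu0 : ∀ t, 0 ≤ u t) :
    LowerSemicontinuous fun t => c t * u t := by
  intro a r hr
  rcases lt_or_ge r 0 with h0 | h0
  · exact Eventually.of_forall fun t => lt_of_lt_of_le h0 (mul_nonneg (hc0 t) (hu0 t))
  · have hpos : 0 < c a * u a := lt_of_le_of_lt h0 hr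
    have hca : 0 < c a := by
      rcases (hc0 a).lt_or_eq with h | h
      · exact h
      · exfalso; rw [← h, zero_mul] at hpos; exact lt_irrefl _ hpos
    have hua : 0 < u a := by
      rcases (hu0 a).lt_or_eq with h | h
      · exact h
      · exfalso; rw [← h, mul_zero] at hpos; exact lt_irrefl _ hpos
    have h1 : r / c a < u a := (div_lt_iff₀ hca).2 (by rw [mul_comm]; exact hr)
    set m : ℝ := (r / c a + u a) / 2 with hm
    have hm1 : r / c a < m := by rw [hm]; linarith
    have hm2 : m < u a := by rw [hm]; linarith
    have hm0 : 0 < m := lt_of_le_of_lt (div_nonneg h0 hca.le) hm1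
    have hrm : r / m < c a := by
      rw [div_lt_iff₀ hm0]
      calc r = c a * (r / c a) := by field_simp
      _ < c a * m := by exact (mul_lt_mul_iff_right₀ hca).2 hm1
      _ = c a * m := rfl
    have hev1 : ∀ᶠ t in 𝓝 a, m < u t := hu a m hm2
    have hev2 : ∀ᶠ t in 𝓝 a, r / m < c t := (hc.tendsto a).eventually (eventually_gt_nhds hrm)
    filter_upwards [hev1, hev2] with t h1t h2t
    have : r / m * m < c t * u t :=
      mul_lt_mul h2t h1t.le hm0 (le_of_lt (lt_of_le_of_lt (div_nonneg h0 hm0.le) h2t))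
    calc r = r / m * m := by field_simp
    _ < c t * u t := this

/-- composition of LSC with a continuous map. -/
lemma lsc_comp {α β : Type*} [TopologicalSpace α] [TopologicalSpace β] {u : β → ℝ}
    (hu : LowerSemicontinuous u) {q : α → β} (hq : Continuous q) :
    LowerSemicontinuous fun a => u (q a) :=
  fun a r hr => (hq.tendsto a).eventually (hu (q a) r hr)

/-- if the sum of two LSC real functions is continuous, then each is continuous. -/
lemma cont_of_lsc_add {α : Type*} [TopologicalSpace α] {f g H : α → ℝ}
    (hf : LowerSemicontinuous f) (hg : LowerSemicontinuous g) (hH : Continuous H)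
    (hsum : ∀ t, f t + g t = H t) : Continuous f := by
  rw [continuous_iff_lower_upperSemicontinuous]
  refine ⟨hf, ?_⟩
  intro a u hu
  have hε : 0 < u - f a := by linarith
  have hev1 : ∀ᶠ t in 𝓝 a, H t < H a + (u - f a) / 2 :=
    (hH.tendsto a).eventually (eventually_lt_nhds (by linarith))
  have hev2 : ∀ᶠ t in 𝓝 a, g a - (u - f a) / 2 < g t := hg a _ (by linarith)
  filter_upwards [hev1, hev2] with t h1t h2t
  have hHa : H a = f a + g a := (hsum a).symm
  have hft : f t = H t - g t := by have := hsum t; linarith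
  rw [hft]
  linarith
end
end Stmt14

namespace Stmt14
noncomputable section

variable (U : Set (P × X))

def Fr (ν : P) : ℝ := ((ν : Measure X) {x | (ν, x) ∈ U}).toReal

variable {U}

lemma θ_coe_nonneg (t : ℝ) : (0 : ℝ) ≤ ((θ t : ℝ≥0) : ℝ) := (θ t).2

lemma θ_coe_le_one (t : ℝ) : ((θ t : ℝ≥0) : ℝ) ≤ 1 := by
  rw [θ_coe]
  exact max_le (min_le_right _ _) zero_le_one

lemma Fr_cont (h_cont : Continuous fun μ : P => (μ : Measure X) {x | (μ, x) ∈ U}) :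
    Continuous (Fr U) := by
  rw [continuous_iff_continuousAt]
  intro ν
  exact (ENNReal.tendsto_toReal (measure_ne_top _ _)).comp (h_cont.tendsto ν)

lemma dirac_ind (x : X) (V : Set X) :
    ((Measure.dirac x) V).toReal = if x ∈ V then 1 else 0 := by
  by_cases h : x ∈ V
  · rw [Measure.dirac_apply_of_mem h, if_pos h, ENNReal.toReal_one]
  · rw [Measure.dirac_apply, Set.indicator_of_notMem h, if_neg h, ENNReal.toReal_zero]

lemma Fr_mix (x : X) (ν : P) (t : ℝ) :
    Fr U (mix x ν t)
      = ((θ t : ℝ≥0) : ℝ) * ((Measure.dirac x) {z | (mix x ν t, z) ∈ U}).toReal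
        + ((θ (1 - t) : ℝ≥0) : ℝ) * ((ν : Measure X) {z | (mix x ν t, z) ∈ U}).toReal := by
  unfold Fr
  rw [mix_apply, ENNReal.toReal_add (ENNReal.mul_ne_top ENNReal.coe_ne_top (measure_ne_top _ _))
    (ENNReal.mul_ne_top ENNReal.coe_ne_top (measure_ne_top _ _)),
    ENNReal.toReal_mul, ENNReal.toReal_mul, ENNReal.coe_toReal, ENNReal.coe_toReal]

lemma core (hU_open : IsOpen U)
    (h_cont : Continuous fun μ : P => (μ : Measure X) {x | (μ, x) ∈ U})
    {x : X} {ν : P} {m1 m2 : Measure X} [IsFiniteMeasure m1] [IsFiniteMeasure m2]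
    {c1 c2 : ℝ → ℝ} (hc1 : Continuous c1) (hc2 : Continuous c2)
    (h10 : ∀ t, 0 ≤ c1 t) (h20 : ∀ t, 0 ≤ c2 t)
    (hdec : ∀ t, Fr U (mix x ν t)
      = c1 t * (m1 {z | (mix x ν t, z) ∈ U}).toReal
        + c2 t * (m2 {z | (mix x ν t, z) ∈ U}).toReal) :
    Continuous fun t => c1 t * (m1 {z | (mix x ν t, z) ∈ U}).toReal := by
  refine cont_of_lsc_add (g := fun t => c2 t * (m2 {z | (mix x ν t, z) ∈ U}).toReal)
    (H := fun t => Fr U (mix x ν t)) ?_ ?_ ?_ (fun t => (hdec t).symm)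
  · exact lsc_mul hc1 h10 (lsc_comp (lsc_aux hU_open m1) (continuous_mix x ν))
      (fun t => ENNReal.toReal_nonneg)
  · exact lsc_mul hc2 h20 (lsc_comp (lsc_aux hU_open m2) (continuous_mix x ν))
      (fun t => ENNReal.toReal_nonneg)
  · exact (Fr_cont h_cont).comp (continuous_mix x ν)

lemma seed_dirac (hU_open : IsOpen U)
    (h_cont : Continuous fun μ : P => (μ : Measure X) {x | (μ, x) ∈ U})
    {μ0 : P} {x0 : X} (h0 : (μ0, x0) ∈ U) : (diracP x0, x0) ∈ U := by
  have hf : Continuous fun t => ((θ t : ℝ≥0) : ℝ)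
      * ((Measure.dirac x0) {z | (mix x0 μ0 t, z) ∈ U}).toReal :=
    core hU_open h_cont θ_coe_cont (θ_coe_cont.comp (continuous_const.sub continuous_id))
      θ_coe_nonneg (fun t => θ_coe_nonneg _) (Fr_mix x0 μ0)
  set f := fun t => ((θ t : ℝ≥0) : ℝ)
      * ((Measure.dirac x0) {z | (mix x0 μ0 t, z) ∈ U}).toReal with hfdef
  set S := {t : ℝ | (mix x0 μ0 t, x0) ∈ U} with hSdef
  have hS : IsOpen S := hU_open.preimage ((continuous_mix x0 μ0).prodMk continuous_const)
  have hS0 : (0 : ℝ) ∈ S := by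
    simp only [hSdef, mem_setOf_eq, mix_zero]
    exact h0
  have hfS : ∀ t ∈ S, f t = ((θ t : ℝ≥0) : ℝ) := by
    intro t ht
    simp only [hfdef, dirac_ind]
    rw [if_pos (show x0 ∈ {z | (mix x0 μ0 t, z) ∈ U} from ht), mul_one]
  have hfnS : ∀ t ∉ S, f t = 0 := by
    intro t ht
    simp only [hfdef, dirac_ind]
    rw [if_neg (show x0 ∉ {z | (mix x0 μ0 t, z) ∈ U} from ht), mul_zero]
  set A := {t : ℝ | f t = ((θ t : ℝ≥0) : ℝ)} with hAdef
  have hAclosed : IsClosed A := isClosed_eq hf θ_coe_cont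
  have hAopen : IsOpen A := by
    rw [isOpen_iff_mem_nhds]
    intro a ha
    by_cases haS : a ∈ S
    · exact Filter.mem_of_superset (hS.mem_nhds haS) (fun t ht => hfS t ht)
    · have hfa : f a = 0 := hfnS a haS
      have hθa : ((θ a : ℝ≥0) : ℝ) = 0 := by rw [← ha]; exact hfa
      have ha0 : a ≤ 0 := by
        by_contra hpos
        push_neg at hpos
        have h1 : (0 : ℝ) < min a 1 := lt_min hpos one_pos
        have h2 : min a 1 ≤ max (min a 1) 0 := le_max_left _ _
        rw [θ_coe] at hθa
        linarith
      have hane : a ≠ 0 := fun h => haS (h ▸ hS0)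
      have halt : a < 0 := lt_of_le_of_ne ha0 hane
      refine Filter.mem_of_superset (Iio_mem_nhds halt) ?_
      intro t ht
      have hθt : ((θ t : ℝ≥0) : ℝ) = 0 := by
        rw [θ_coe]
        rw [max_eq_right]
        exact le_trans (min_le_left _ _) (le_of_lt (mem_Iio.1 ht))
      show f t = _
      rw [hθt]
      rcases Classical.em (t ∈ S) with h | h
      · rw [hfS t h, hθt]
      · rw [hfnS t h]
  have hA1 : A = univ := (IsClopen.eq_univ ⟨hAclosed, hAopen⟩ ⟨0, hfS 0 hS0⟩)
  have h1A : (1 : ℝ) ∈ A := hA1 ▸ mem_univ 1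
  have h1S : (1 : ℝ) ∈ S := by
    by_contra h
    have := hfnS 1 h
    rw [hAdef] at h1A
    simp only [mem_setOf_eq] at h1A
    rw [this] at h1A
    rw [θ_coe] at h1A
    norm_num at h1A
  rw [hSdef] at h1S
  simp only [mem_setOf_eq, mix_one] at h1S
  exact h1S

end
end Stmt14

namespace Stmt14
noncomputable section

variable {U : Set (P × X)}

lemma dirac_all (hU_open : IsOpen U)
    (h_cont : Continuous fun μ : P => (μ : Measure X) {x | (μ, x) ∈ U})
    {x0 : X} (h0 : (diracP x0, x0) ∈ U) : ∀ x : X, (diracP x, x) ∈ U := by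
  set B := {x : X | (diracP x, x) ∈ U} with hBdef
  have hBopen : IsOpen B := hU_open.preimage (continuous_diracP.prodMk continuous_id)
  have hBval : ∀ x : X, Fr U (diracP x) = if x ∈ B then 1 else 0 := by
    intro x
    unfold Fr
    rw [diracP_toMeasure, dirac_ind]
    by_cases h : (diracP x, x) ∈ U
    · rw [if_pos (show x ∈ {z | (diracP x, z) ∈ U} from h), if_pos (show x ∈ B from h)]
    · rw [if_neg (show x ∉ {z | (diracP x, z) ∈ U} from h), if_neg (show x ∉ B from h)]
  have hBeq : B = (fun x => Fr U (diracP x)) ⁻¹' {1} := by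
    ext x
    simp only [mem_preimage, mem_singleton_iff, hBval]
    constructor
    · intro h; rw [if_pos h]
    · intro h
      by_contra hc
      rw [if_neg hc] at h
      norm_num at h
  have hBclosed : IsClosed B := by
    rw [hBeq]
    exact IsClosed.preimage ((Fr_cont h_cont).comp continuous_diracP) isClosed_singleton
  have : B = univ := IsClopen.eq_univ ⟨hBclosed, hBopen⟩ ⟨x0, h0⟩
  intro x
  have := this ▸ mem_univ x
  exact this

lemma atom_mem (hU_open : IsOpen U)
    (h_cont : Continuous fun μ : P => (μ : Measure X) {x | (μ, x) ∈ U})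
    (hd : ∀ x : X, (diracP x, x) ∈ U)
    (σ : P) (y : X) (hb : (σ : Measure X) {y} ≠ 0) : (σ, y) ∈ U := by
  set b' := ((σ : Measure X) {y}).toReal with hb'def
  have hb' : 0 < b' := ENNReal.toReal_pos hb (measure_ne_top _ _)
  set m := (σ : Measure X).restrict {y}ᶜ with hmdef
  have hsplit : ∀ V : Set X,
      (((σ : Measure X)) V).toReal
        = b' * ((Measure.dirac y) V).toReal + (m V).toReal := by
    intro V
    have h1 : (σ : Measure X) V
        = (σ : Measure X) (V ∩ {y}) + (σ : Measure X) (V \ {y}) :=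
      (measure_inter_add_diff V (measurableSet_singleton y)).symm
    have h2 : m V = (σ : Measure X) (V \ {y}) := by
      rw [hmdef, Measure.restrict_apply' (measurableSet_singleton y).compl, diff_eq]
    by_cases hy : y ∈ V
    · have hVy : V ∩ {y} = {y} := Set.inter_eq_right.2 (singleton_subset_iff.2 hy)
      rw [h1, hVy, Measure.dirac_apply_of_mem hy, ENNReal.toReal_one, mul_one,
        ENNReal.toReal_add (measure_ne_top _ _) (measure_ne_top _ _), h2]
    · have hVy : V ∩ {y} = ∅ := by
        ext z
        simp only [mem_inter_iff, mem_singleton_iff, mem_empty_iff_false, iff_false, not_and]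
        rintro hz rfl
        exact hy hz
      have hdy : (Measure.dirac y) V = 0 := by
        rw [Measure.dirac_apply, Set.indicator_of_notMem hy]
      rw [h1, hVy, measure_empty, zero_add, hdy, ENNReal.toReal_zero, mul_zero, zero_add, h2]
  set c1 : ℝ → ℝ := fun t => ((θ t : ℝ≥0) : ℝ) + ((θ (1 - t) : ℝ≥0) : ℝ) * b' with hc1def
  have hc1 : Continuous c1 :=
    θ_coe_cont.add ((θ_coe_cont.comp (continuous_const.sub continuous_id)).mul continuous_const)
  have hc1pos : ∀ t, 0 < c1 t := by
    intro t
    have h1 := θ_add_real t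
    have h2 := θ_coe_nonneg t
    have h3 := θ_coe_nonneg (1 - t)
    have h4 := θ_coe_le_one (1 - t)
    rw [hc1def]
    simp only
    rcases lt_or_eq_of_le h2 with hpos | heq
    · exact add_pos_of_pos_of_nonneg hpos (mul_nonneg h3 hb'.le)
    · have hθ1 : ((θ (1 - t) : ℝ≥0) : ℝ) = 1 := by linarith
      rw [← heq, hθ1, zero_add, one_mul]
      exact hb'
  have hdec : ∀ t, Fr U (mix y σ t)
      = c1 t * ((Measure.dirac y) {z | (mix y σ t, z) ∈ U}).toReal
        + ((θ (1 - t) : ℝ≥0) : ℝ) * (m {z | (mix y σ t, z) ∈ U}).toReal := by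
    intro t
    rw [Fr_mix, hsplit {z | (mix y σ t, z) ∈ U}]
    ring
  have hf : Continuous fun t => c1 t * ((Measure.dirac y) {z | (mix y σ t, z) ∈ U}).toReal :=
    core hU_open h_cont hc1 (θ_coe_cont.comp (continuous_const.sub continuous_id))
      (fun t => (hc1pos t).le) (fun t => θ_coe_nonneg _) hdec
  set f := fun t => c1 t * ((Measure.dirac y) {z | (mix y σ t, z) ∈ U}).toReal with hfdef
  set S := {t : ℝ | (mix y σ t, y) ∈ U} with hSdef
  have hSopen : IsOpen S := hU_open.preimage ((continuous_mix y σ).prodMk continuous_const)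
  have hAS : {t : ℝ | f t = c1 t} = S := by
    ext t
    simp only [mem_setOf_eq, hfdef, dirac_ind]
    by_cases ht : (mix y σ t, y) ∈ U
    · rw [if_pos ht, mul_one]
      simp only [hSdef, mem_setOf_eq]
      simp [ht]
    · rw [if_neg ht, mul_zero]
      constructor
      · intro h
        exact absurd h.symm (ne_of_gt (hc1pos t))
      · intro h
        exact absurd h ht
  have hAclosed : IsClosed {t : ℝ | f t = c1 t} := isClosed_eq hf hc1
  have h1S : (1 : ℝ) ∈ S := by
    simp only [hSdef, mem_setOf_eq, mix_one]
    exact hd y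
  have hSuniv : S = univ := by
    apply IsClopen.eq_univ ⟨hAS ▸ hAclosed, hSopen⟩
    exact ⟨1, h1S⟩
  have h0S : (0 : ℝ) ∈ S := hSuniv ▸ mem_univ 0
  simp only [hSdef, mem_setOf_eq, mix_zero] at h0S
  exact h0S

end
end Stmt14

namespace Stmt14
noncomputable section

variable {U : Set (P × X)}

def fn (n : ℕ) (x : X) : X :=
  ⟨(⌊((n : ℝ) + 1) * x.1⌋ : ℝ) / ((n : ℝ) + 1), by
    have hc : (0 : ℝ) < (n : ℝ) + 1 := by positivity
    have h0 : (0 : ℤ) ≤ ⌊((n : ℝ) + 1) * x.1⌋ :=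
      Int.floor_nonneg.2 (mul_nonneg hc.le x.2.1)
    constructor
    · exact div_nonneg (by exact_mod_cast h0) hc.le
    · rw [div_le_one hc]
      calc ((⌊((n : ℝ) + 1) * x.1⌋ : ℝ)) ≤ ((n : ℝ) + 1) * x.1 := Int.floor_le _
      _ ≤ ((n : ℝ) + 1) * 1 := by nlinarith [x.2.2]
      _ = (n : ℝ) + 1 := mul_one _⟩

lemma fn_measurable (n : ℕ) : Measurable (fn n) := by
  apply Measurable.subtype_mk
  have h1 : Measurable fun x : X => (⌊((n : ℝ) + 1) * x.1⌋ : ℤ) :=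
    (measurable_subtype_coe.const_mul _).floor
  have h2 : Measurable (Int.cast : ℤ → ℝ) := measurable_from_top
  exact (h2.comp h1).div_const _

lemma fn_range_finite (n : ℕ) : (Set.range (fn n)).Finite := by
  have hc : (0 : ℝ) < (n : ℝ) + 1 := by positivity
  have hsub : Set.range (fn n) ⊆
      (fun k : ℤ => (⟨min (max ((k : ℝ) / ((n : ℝ) + 1)) 0) 1,
        ⟨le_min (le_max_right _ _) zero_le_one, min_le_right _ _⟩⟩ : X)) ''
        (Set.Icc 0 ((n : ℤ) + 1)) := by
    rintro _ ⟨x, rfl⟩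
    refine ⟨⌊((n : ℝ) + 1) * x.1⌋, ?_, ?_⟩
    · constructor
      · exact Int.floor_nonneg.2 (mul_nonneg hc.le x.2.1)
      · have : (((n : ℤ) + 1 : ℤ) : ℝ) = (n : ℝ) + 1 := by push_cast; ring
        rw [← Int.floor_intCast (R := ℝ) ((n : ℤ) + 1)]
        apply Int.floor_le_floor
        rw [this]
        nlinarith [x.2.2, x.2.1]
    · apply Subtype.ext
      have h0 : (0 : ℝ) ≤ (⌊((n : ℝ) + 1) * x.1⌋ : ℝ) / ((n : ℝ) + 1) := (fn n x).2.1
      have h1 : (⌊((n : ℝ) + 1) * x.1⌋ : ℝ) / ((n : ℝ) + 1) ≤ 1 := (fn n x).2.2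
      show min (max ((⌊((n : ℝ) + 1) * x.1⌋ : ℝ) / ((n : ℝ) + 1)) 0) 1 = _
      rw [max_eq_left h0, min_eq_left h1]
      rfl
  exact ((Set.finite_Icc _ _).image _).subset hsub

lemma fn_tendsto (x : X) : Tendsto (fun n => fn n x) atTop (𝓝 x) := by
  rw [tendsto_subtype_rng]
  have hle : ∀ n : ℕ, ((fn n x : X) : ℝ) ≤ x.1 := by
    intro n
    have hc : (0 : ℝ) < (n : ℝ) + 1 := by positivity
    show (⌊((n : ℝ) + 1) * x.1⌋ : ℝ) / ((n : ℝ) + 1) ≤ x.1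
    rw [div_le_iff₀ hc]
    rw [mul_comm]
    exact Int.floor_le _
  have hge : ∀ n : ℕ, x.1 - 1 / ((n : ℝ) + 1) ≤ ((fn n x : X) : ℝ) := by
    intro n
    have hc : (0 : ℝ) < (n : ℝ) + 1 := by positivity
    show x.1 - 1 / ((n : ℝ) + 1) ≤ (⌊((n : ℝ) + 1) * x.1⌋ : ℝ) / ((n : ℝ) + 1)
    have h := (Int.sub_one_lt_floor (((n : ℝ) + 1) * x.1)).le
    have heq : x.1 - 1 / ((n : ℝ) + 1) = (((n : ℝ) + 1) * x.1 - 1) / ((n : ℝ) + 1) := by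
      field_simp
    rw [heq]
    gcongr
  have hlow : Tendsto (fun n : ℕ => x.1 - 1 / ((n : ℝ) + 1)) atTop (𝓝 x.1) := by
    have := tendsto_const_nhds (x := x.1) (f := atTop (α := ℕ)) |>.sub
      tendsto_one_div_add_atTop_nhds_zero_nat
    simpa using this
  exact tendsto_of_tendsto_of_tendsto_of_le_of_le hlow tendsto_const_nhds hge hle

lemma all_one (hU_open : IsOpen U)
    (h_cont : Continuous fun μ : P => (μ : Measure X) {x | (μ, x) ∈ U})
    (hd : ∀ x : X, (diracP x, x) ∈ U) :
    ∀ μ : P, (μ : Measure X) {x | (μ, x) ∈ U} = 1 := by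
  intro μ
  set Pn : ℕ → P := fun n =>
    ⟨Measure.map (fn n) (μ : Measure X),
      Measure.isProbabilityMeasure_map (fn_measurable n).aemeasurable⟩ with hPndef
  have hPn_to : ∀ n, (Pn n : Measure X) = Measure.map (fn n) (μ : Measure X) := fun n => rfl
  have hPn1 : ∀ n, (Pn n : Measure X) {x | (Pn n, x) ∈ U} = 1 := by
    intro n
    set R := Set.range (fn n) with hRdef
    have hRfin : R.Finite := fn_range_finite n
    have hRmeas : MeasurableSet R := hRfin.measurableSet
    have hR1 : (Pn n : Measure X) R = 1 := by
      rw [hPn_to n, Measure.map_apply (fn_measurable n) hRmeas, Set.preimage_range, measure_univ]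
    have hnull : (Pn n : Measure X) (R \ {x | (Pn n, x) ∈ U}) = 0 := by
      have hcount : (R \ {x | (Pn n, x) ∈ U}).Countable :=
        (hRfin.subset diff_subset).countable
      rw [← Set.biUnion_of_singleton (R \ {x | (Pn n, x) ∈ U}),
        measure_biUnion_null_iff hcount]
      intro y hy
      by_contra hne
      exact hy.2 (atom_mem hU_open h_cont hd (Pn n) y hne)
    have h2 : (1 : ℝ≥0∞) ≤ (Pn n : Measure X) {x | (Pn n, x) ∈ U} := by
      calc (1 : ℝ≥0∞) = (Pn n : Measure X) R := hR1.symm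
      _ ≤ (Pn n : Measure X) ((R ∩ {x | (Pn n, x) ∈ U}) ∪ (R \ {x | (Pn n, x) ∈ U})) :=
          measure_mono (by rw [Set.inter_union_diff])
      _ ≤ (Pn n : Measure X) (R ∩ {x | (Pn n, x) ∈ U})
            + (Pn n : Measure X) (R \ {x | (Pn n, x) ∈ U}) := measure_union_le _ _
      _ = (Pn n : Measure X) (R ∩ {x | (Pn n, x) ∈ U}) := by rw [hnull, add_zero]
      _ ≤ (Pn n : Measure X) {x | (Pn n, x) ∈ U} := measure_mono inter_subset_right
    refine le_antisymm ?_ h2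
    calc (Pn n : Measure X) {x | (Pn n, x) ∈ U} ≤ (Pn n : Measure X) univ :=
        measure_mono (subset_univ _)
    _ = 1 := measure_univ
  have htend : Tendsto Pn atTop (𝓝 μ) := by
    rw [ProbabilityMeasure.tendsto_iff_forall_integral_tendsto]
    intro g
    have hkey : ∀ n, ∫ y, g y ∂(Pn n : Measure X) = ∫ x, g (fn n x) ∂(μ : Measure X) := by
      intro n
      rw [hPn_to n, integral_map (fn_measurable n).aemeasurable g.continuous.aestronglyMeasurable]
    simp only [hkey]
    apply tendsto_integral_of_dominated_convergence (bound := fun _ => ‖g‖)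
    · intro n
      exact (g.continuous.measurable.comp (fn_measurable n)).aestronglyMeasurable
    · exact integrable_const _
    · intro n
      exact Eventually.of_forall fun x => g.norm_coe_le_norm _
    · exact Eventually.of_forall fun x => (g.continuous.tendsto x).comp (fn_tendsto x)
  have h1 : Tendsto (fun n => (Pn n : Measure X) {x | (Pn n, x) ∈ U}) atTop
      (𝓝 ((μ : Measure X) {x | (μ, x) ∈ U})) := (h_cont.tendsto μ).comp htend
  have h2 : (fun n => (Pn n : Measure X) {x | (Pn n, x) ∈ U}) = fun _ => (1 : ℝ≥0∞) :=
    funext hPn1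
  rw [h2] at h1
  exact tendsto_nhds_unique h1 tendsto_const_nhds

end
end Stmt14

/-- there are no non-trivial uniform Schnorr sequential tests on `[0,1]`:
an open set `U ⊆ P([0,1]) × [0,1]` whose sectionwise measure varies continuously has
either all sections empty or all sections of full measure. -/
theorem stmt_14 (U : Set (ProbabilityMeasure unitInterval × unitInterval))
    (hU_open : IsOpen U)
    (hU_sec : ∀ μ : ProbabilityMeasure unitInterval, IsOpen {x | (μ, x) ∈ U})
    (h_cont : Continuous
      (fun μ : ProbabilityMeasure unitInterval => (μ : Measure unitInterval) {x | (μ, x) ∈ U})) :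
    (∀ μ : ProbabilityMeasure unitInterval, {x | (μ, x) ∈ U} = ∅) ∨
    (∀ μ : ProbabilityMeasure unitInterval, (μ : Measure unitInterval) {x | (μ, x) ∈ U} = 1) := by
  by_cases hemp : ∀ μ : ProbabilityMeasure unitInterval, {x | (μ, x) ∈ U} = ∅
  · exact Or.inl hemp
  · right
    push_neg at hemp
    obtain ⟨μ0, hμ0⟩ := hemp
    obtain ⟨x0, hx0⟩ := hμ0
    exact Stmt14.all_one hU_open h_cont
      (Stmt14.dirac_all hU_open h_cont (Stmt14.seed_dirac hU_open h_cont hx0))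
end
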